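/- Let G be a finitely generated pro-p group and let L be a ℤ_p-lattice with a continuous ℤ_p-linear right G-action. Suppose there is a chain of G-invariant ℤ_p-submodules L = M_1 ⊇ M_2 ⊇ … ⊇ M_{c+1} = {0} such that G acts trivially on each section M_s/M_{s+1} (i.e. m·g − m ∈ M_{s+1} for all m ∈ M_s, g ∈ G, 1 ≤ s ≤ c). Then for every i ∈ ℕ one has p^i L ⊆ λ_i(L) ⊆ p^{i−c} L, where negative powers of p are interpreted inside ℚ_p ⊗_{ℤ_p} L; in particular the lower p-series λ_i(L), i ∈ ℕ, and the series p^i L, i ∈ ℕ, are c-equivalent filtration series of L. -/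

import Mathlib

open Filter Topology
open scoped TensorProduct

/-- A profinite group that is pro-`p`. -/
def IsProPGroup (p : ℕ) (G : Type*) [Group G] [TopologicalSpace G] : Prop :=
  CompactSpace G ∧ T2Space G ∧ TotallyDisconnectedSpace G ∧
    ∀ N : Subgroup G, N.Normal → IsOpen (N : Set G) → ∃ k : ℕ, N.index = p ^ k

/-- Topologically finitely generated. -/
def IsTopFG (G : Type*) [Group G] [TopologicalSpace G] [IsTopologicalGroup G] : Prop :=
  ∃ s : Finset G, (Subgroup.closure (s : Set G)).topologicalClosure = ⊤

variable (p : ℕ) [Fact p.Prime]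

/-- The sublattice `p^k L` of a `ℤ_p`-lattice `L`. -/
noncomputable def pPowLat (L : Type*) [AddCommGroup L] [Module ℤ_[p] L] (k : ℕ) :
    Submodule ℤ_[p] L :=
  LinearMap.range (((p : ℤ_[p]) ^ k) • (LinearMap.id : L →ₗ[ℤ_[p]] L))

/-- `ℓ_L(M) = min { k : p^k L ⊆ M }`. -/
noncomputable def ellLat (L : Type*) [AddCommGroup L] [Module ℤ_[p] L]
    (M : Submodule ℤ_[p] L) : ℕ :=
  sInf { k : ℕ | pPowLat p L k ≤ M }

/-- `u_L(M) = max { k : M ⊆ p^k L }`. -/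
noncomputable def uLat (L : Type*) [AddCommGroup L] [Module ℤ_[p] L]
    (M : Submodule ℤ_[p] L) : ℕ :=
  sSup { k : ℕ | M ≤ pPowLat p L k }

/-- The lower `p`-series `λ_i(L) = L·𝔞_G^i` of a `ℤ_p G`-module `L`, where
`𝔞_G = Σ_g (g−1)ℤ_pG + pℤ_pG`; recursively `λ_0(L) = L` and
`λ_{i+1}(L) = p·λ_i(L) + span{ m·g − m : m ∈ λ_i(L), g ∈ G }`. -/
noncomputable def lambdaSeries {G : Type*} [Group G] (L : Type*) [AddCommGroup L]
    [Module ℤ_[p] L] (ρ : G →* (L ≃ₗ[ℤ_[p]] L)) : ℕ → Submodule ℤ_[p] L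
  | 0 => ⊤
  | i + 1 =>
      Submodule.map (((p : ℤ_[p])) • (LinearMap.id : L →ₗ[ℤ_[p]] L))
          (lambdaSeries L ρ i) ⊔
        Submodule.span ℤ_[p] { x : L | ∃ m ∈ lambdaSeries L ρ i, ∃ g : G, ρ g m - m = x }

section AuxProof

/-- Multiplication by `p^e` as a linear map. -/
noncomputable def pMapAux (L : Type) [AddCommGroup L] [Module ℤ_[p] L] (e : ℕ) :
    L →ₗ[ℤ_[p]] L := ((p : ℤ_[p]) ^ e) • LinearMap.id

variable {L : Type} [AddCommGroup L] [Module ℤ_[p] L]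

lemma pPowLat_eq_map (i : ℕ) : pPowLat p L i = Submodule.map (pMapAux p L i) ⊤ :=
  LinearMap.range_eq_map _

lemma map_pMapAux_map (a b : ℕ) (N : Submodule ℤ_[p] L) :
    Submodule.map (pMapAux p L a) (Submodule.map (pMapAux p L b) N) =
      Submodule.map (pMapAux p L (a + b)) N := by
  rw [← Submodule.map_comp]
  congr 1
  ext x
  simp [pMapAux, smul_smul, ← pow_add, Nat.add_comm]

lemma map_pMapAux_le {a b : ℕ} (h : a ≤ b) (N : Submodule ℤ_[p] L) :
    Submodule.map (pMapAux p L b) N ≤ Submodule.map (pMapAux p L a) N := by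
  rintro x ⟨m, hm, rfl⟩
  refine ⟨((p : ℤ_[p]) ^ (b - a)) • m, N.smul_mem _ hm, ?_⟩
  simp only [pMapAux, LinearMap.smul_apply, LinearMap.id_coe, id_eq, smul_smul, ← pow_add]
  congr 2
  omega

variable {G : Type} [Group G] (ρ : G →* (L ≃ₗ[ℤ_[p]] L))

lemma pPow_le_lambdaAux : ∀ i : ℕ, pPowLat p L i ≤ lambdaSeries p L ρ i := by
  intro i
  induction i with
  | zero => exact le_top
  | succ i ih =>
    rintro x ⟨m, rfl⟩
    rw [lambdaSeries]
    apply Submodule.mem_sup_left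
    refine ⟨((p : ℤ_[p]) ^ i) • m, ih ⟨m, rfl⟩, ?_⟩
    simp [smul_smul, pow_succ, mul_comm]

lemma lambda_le_iSupAux (c : ℕ) (M : ℕ → Submodule ℤ_[p] L)
    (hM1 : M 1 = ⊤) (hMtop : M (c + 1) = ⊥)
    (htriv : ∀ s : ℕ, 1 ≤ s → s ≤ c → ∀ m ∈ M s, ∀ g : G, ρ g m - m ∈ M (s + 1)) :
    ∀ i : ℕ, lambdaSeries p L ρ i ≤
      ⨆ s ∈ Finset.Icc 1 (c + 1), Submodule.map (pMapAux p L (i + 1 - s)) (M s) := by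
  intro i
  induction i with
  | zero =>
    have hid : pMapAux p L (0 + 1 - 1) = LinearMap.id := by
      ext x; simp [pMapAux]
    have h1 : (⊤ : Submodule ℤ_[p] L) = Submodule.map (pMapAux p L (0 + 1 - 1)) (M 1) := by
      rw [hid, Submodule.map_id, hM1]
    refine le_trans (le_of_eq ?_) (le_iSup₂
      (f := fun s _ => Submodule.map (pMapAux p L (0 + 1 - s)) (M s)) 1 (by simp))
    rw [lambdaSeries, h1]
  | succ i ih =>
    rw [lambdaSeries]
    apply sup_le
    · refine le_trans (Submodule.map_mono ih) ?_
      rw [Submodule.map_le_iff_le_comap]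
      refine iSup₂_le fun s hs => ?_
      rw [← Submodule.map_le_iff_le_comap]
      have h1 : ((p : ℤ_[p]) • (LinearMap.id : L →ₗ[ℤ_[p]] L)) = pMapAux p L 1 := by
        ext x; simp [pMapAux]
      rw [h1, map_pMapAux_map]
      refine le_trans (map_pMapAux_le p (by omega : i + 1 + 1 - s ≤ 1 + (i + 1 - s)) (M s)) ?_
      exact le_iSup₂ (f := fun s _ => Submodule.map (pMapAux p L (i + 1 + 1 - s)) (M s)) s hs
    · rw [Submodule.span_le]
      rintro x ⟨m, hm, g, rfl⟩
      have hmT := ih hm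
      set Dg : L →ₗ[ℤ_[p]] L := (ρ g : L ≃ₗ[ℤ_[p]] L).toLinearMap - LinearMap.id with hDg
      have hx : ρ g m - m = Dg m := by simp [hDg]
      rw [SetLike.mem_coe, hx]
      have key : Submodule.map Dg
          (⨆ s ∈ Finset.Icc 1 (c + 1), Submodule.map (pMapAux p L (i + 1 - s)) (M s)) ≤
          ⨆ s ∈ Finset.Icc 1 (c + 1), Submodule.map (pMapAux p L (i + 1 + 1 - s)) (M s) := by
        rw [Submodule.map_le_iff_le_comap]
        refine iSup₂_le fun s hs => ?_
        rw [← Submodule.map_le_iff_le_comap]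
        rintro y ⟨z, ⟨m', hm', rfl⟩, rfl⟩
        obtain ⟨hs1, hs2⟩ := Finset.mem_Icc.mp hs
        rcases Nat.lt_or_ge s (c + 1) with hlt | hge
        · have hsc : s ≤ c := by omega
          have hd : Dg m' ∈ M (s + 1) := htriv s hs1 hsc m' hm' g
          have heq : Dg (pMapAux p L (i + 1 - s) m') =
              pMapAux p L (i + 1 + 1 - (s + 1)) (Dg m') := by
            have : i + 1 + 1 - (s + 1) = i + 1 - s := by omega
            rw [this]
            simp [pMapAux, hDg]
          rw [heq]
          exact le_iSup₂ (f := fun s _ => Submodule.map (pMapAux p L (i + 1 + 1 - s)) (M s))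
            (s + 1) (Finset.mem_Icc.mpr ⟨by omega, by omega⟩) ⟨Dg m', hd, rfl⟩
        · have hseq : s = c + 1 := by omega
          subst hseq
          have hm0 : m' = 0 := by rw [hMtop] at hm'; simpa using hm'
          subst hm0
          simp
      exact key (Submodule.mem_map_of_mem hmT)

lemma lambda_pc_le_pPowAux (c : ℕ) (M : ℕ → Submodule ℤ_[p] L)
    (hM1 : M 1 = ⊤) (hMtop : M (c + 1) = ⊥)
    (htriv : ∀ s : ℕ, 1 ≤ s → s ≤ c → ∀ m ∈ M s, ∀ g : G, ρ g m - m ∈ M (s + 1)) :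
    ∀ i : ℕ, ∀ x ∈ lambdaSeries p L ρ i, ((p : ℤ_[p]) ^ c) • x ∈ pPowLat p L i := by
  intro i x hx
  have hx' := lambda_le_iSupAux p ρ c M hM1 hMtop htriv i hx
  have hmem : pMapAux p L c x ∈ Submodule.map (pMapAux p L c)
      (⨆ s ∈ Finset.Icc 1 (c + 1), Submodule.map (pMapAux p L (i + 1 - s)) (M s)) :=
    Submodule.mem_map_of_mem hx'
  have key : Submodule.map (pMapAux p L c)
      (⨆ s ∈ Finset.Icc 1 (c + 1), Submodule.map (pMapAux p L (i + 1 - s)) (M s)) ≤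
      pPowLat p L i := by
    rw [Submodule.map_le_iff_le_comap]
    refine iSup₂_le fun s hs => ?_
    rw [← Submodule.map_le_iff_le_comap, map_pMapAux_map]
    obtain ⟨hs1, hs2⟩ := Finset.mem_Icc.mp hs
    refine le_trans (map_pMapAux_le p (by omega : i ≤ c + (i + 1 - s)) (M s)) ?_
    rw [pPowLat_eq_map]
    exact Submodule.map_mono le_top
  exact key hmem

end AuxProof

/-- Let `G` be a finitely generated pro-`p` group and `L` a `ℤ_p`-lattice with a continuous
`ℤ_p`-linear `G`-action `ρ`. Suppose there is a chain of `G`-invariant submodules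
`L = M_1 ⊇ M_2 ⊇ … ⊇ M_{c+1} = 0` such that `G` acts trivially on each section
`M_s/M_{s+1}`. Then for every `i ≥ 1` one has `p^i L ⊆ λ_i(L) ⊆ p^{i−c} L`, where negative
powers of `p` are interpreted inside `ℚ_p ⊗_{ℤ_p} L`; in particular the lower `p`-series
`λ_i(L)` and the series `p^i L` are `c`-equivalent filtration series of `L`
(`p^c·λ_i(L) ⊆ p^i L` and `p^c·p^i L ⊆ λ_i(L)`). -/
theorem lambdaSeries_c_equivalent_pPow
    (G : Type) [Group G] [TopologicalSpace G] [IsTopologicalGroup G]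
    (hG : IsProPGroup p G) (hfg : IsTopFG G)
    (L : Type) [AddCommGroup L] [Module ℤ_[p] L] [Module.Free ℤ_[p] L] [Module.Finite ℤ_[p] L]
    (ρ : G →* (L ≃ₗ[ℤ_[p]] L))
    (hcont : ∀ k : ℕ, IsOpen { g : G | ∀ m : L, ρ g m - m ∈ pPowLat p L k })
    (c : ℕ) (M : ℕ → Submodule ℤ_[p] L)
    (hM1 : M 1 = ⊤) (hMtop : M (c + 1) = ⊥)
    (hdesc : ∀ s : ℕ, 1 ≤ s → s ≤ c → M (s + 1) ≤ M s)
    (hinv : ∀ s : ℕ, 1 ≤ s → s ≤ c + 1 →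
      ∀ g : G, (M s).map ((ρ g : L ≃ₗ[ℤ_[p]] L) : L →ₗ[ℤ_[p]] L) ≤ M s)
    (htriv : ∀ s : ℕ, 1 ≤ s → s ≤ c → ∀ m ∈ M s, ∀ g : G, ρ g m - m ∈ M (s + 1)) :
    ∀ i : ℕ, 1 ≤ i →
      (pPowLat p L i ≤ lambdaSeries p L ρ i) ∧
      (∀ x ∈ lambdaSeries p L ρ i, ∃ y : L,
        ((1 : ℚ_[p]) ⊗ₜ[ℤ_[p]] x : ℚ_[p] ⊗[ℤ_[p]] L) =
          ((p : ℚ_[p]) ^ ((i : ℤ) - (c : ℤ))) • ((1 : ℚ_[p]) ⊗ₜ[ℤ_[p]] y)) ∧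
      (∀ x ∈ lambdaSeries p L ρ i, ((p : ℤ_[p]) ^ c) • x ∈ pPowLat p L i) ∧
      (∀ x ∈ pPowLat p L i, ((p : ℤ_[p]) ^ c) • x ∈ lambdaSeries p L ρ i) := by
  intro i _
  have hlow := pPow_le_lambdaAux p ρ i
  have hup := lambda_pc_le_pPowAux p ρ c M hM1 hMtop htriv i
  refine ⟨hlow, ?_, hup, fun x hx => hlow (Submodule.smul_mem _ _ hx)⟩
  intro x hx
  obtain ⟨y, hy⟩ := hup x hx
  have hy' : ((p : ℤ_[p]) ^ i) • y = ((p : ℤ_[p]) ^ c) • x := by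
    simpa using hy
  refine ⟨y, ?_⟩
  have hq : (p : ℚ_[p]) ≠ 0 := by
    exact_mod_cast (Nat.cast_ne_zero (R := ℚ_[p])).mpr (Fact.out : p.Prime).ne_zero
  have ht := congrArg (fun z : L => ((1 : ℚ_[p]) ⊗ₜ[ℤ_[p]] z : ℚ_[p] ⊗[ℤ_[p]] L)) hy'
  simp only [TensorProduct.tmul_smul] at ht
  rw [← algebraMap_smul ℚ_[p] ((p : ℤ_[p]) ^ i), ← algebraMap_smul ℚ_[p] ((p : ℤ_[p]) ^ c),
    map_pow, map_pow, PadicInt.algebraMap_apply, PadicInt.coe_natCast] at ht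
  rw [sub_eq_add_neg, zpow_add₀ hq, zpow_neg, zpow_natCast, zpow_natCast, mul_comm, mul_smul,
    ht, inv_smul_smul₀ (pow_ne_zero _ hq)]
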